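/- The first Maclaurin coefficients of (1+x)^{1/x}/e are e₀ = 1, e₁ = -1/2, e₂ = 11/24, e₃ = -7/16, e₄ = 2447/5760, e₅ = -959/2304, e₆ = 238043/580608. -/

import Mathlib

open Filter Asymptotics Finset Topology
open scoped NNReal ENNReal

/-- `(1+x)^{1/x}` extended by `e` at `0`. -/
noncomputable def eFun (x : ℝ) : ℝ :=
  if x = 0 then Real.exp 1 else Real.exp (Real.log (1 + x) / x)

/-- Degree-6 Taylor polynomial of `log(1+x)/x - 1`. -/
noncomputable def Qp (x : ℝ) : ℝ :=
  -x/2 + x^2/3 - x^3/4 + x^4/5 - x^5/6 + x^6/7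

noncomputable def Rp (x : ℝ) : ℝ :=
  -1/2 + x/3 - x^2/4 + x^3/5 - x^4/6 + x^5/7

/-- Degree-7 Taylor polynomial of `log(1+x)`. -/
noncomputable def Mp (x : ℝ) : ℝ :=
  x - x^2/2 + x^3/3 - x^4/4 + x^5/5 - x^6/6 + x^7/7

/-- Target degree-6 Taylor polynomial of `(1+x)^{1/x}/e`. -/
noncomputable def Pp (x : ℝ) : ℝ :=
  1 - x/2 + (11/24)*x^2 - (7/16)*x^3 + (2447/5760)*x^4 - (959/2304)*x^5 + (238043/580608)*x^6

noncomputable def Sp (x : ℝ) : ℝ :=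
  (- 406759 / 1451520) + (9922187 / 43545600) * x - (24049 / 129600) * x ^ 2 + (78038581 / 522547200) * x ^ 3 - (2190371 / 18662400) * x ^ 4 + (3645843661 / 41150592000) * x ^ 5 - (1140565123 / 18289152000) * x ^ 6 + (3366397631 / 73156608000) * x ^ 7 - (526446401 / 15676416000) * x ^ 8 + (2933540257 / 121927680000) * x ^ 9 - (3077846789 / 182891520000) * x ^ 10 + (352069988041 / 30725775360000) * x ^ 11 - (1953356833 / 256048128000) * x ^ 12 + (108658702109 / 21337344000000) * x ^ 13 - (136867390531 / 41150592000000) * x ^ 14 + (135339464909 / 64012032000000) * x ^ 15 - (20860342997 / 16003008000000) * x ^ 16 + (1308322258283 / 1680315840000000) * x ^ 17 - (4217800703 / 9335088000000) * x ^ 18 + (28662352763 / 112021056000000) * x ^ 19 - (29214131 / 210039480000) * x ^ 20 + (80736643 / 1120210560000) * x ^ 21 - (565753 / 16003008000) * x ^ 22 + (230620771 / 14114653056000) * x ^ 23 - (557873 / 78414739200) * x ^ 24 + (76147 / 26138246400) * x ^ 25 - (22 / 20420505) * x ^ 26 + (247 / 726062400) * x ^ 27 - (1 / 12101040) * x ^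 28 + (1 / 84707280) * x ^ 29

noncomputable def tval : ℕ → ℝ
  | 0 => 1
  | 1 => -(1/2)
  | 2 => 11/24
  | 3 => -(7/16)
  | 4 => 2447/5760
  | 5 => -(959/2304)
  | 6 => 238043/580608
  | _ => 0

lemma key_ring_identity (x : ℝ) :
    (∑ i ∈ Finset.range 7, Qp x ^ i / (i.factorial : ℝ)) - Pp x = x ^ 7 * Sp x := by
  simp only [Qp, Pp, Sp, Finset.sum_range_succ, Finset.sum_range_zero, Nat.factorial]
  push_cast
  ring

/-- A polynomial that is `O(x^m)` at `0` has vanishing coefficients below `m`. -/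
lemma poly_coeff_eq_zero : ∀ (m N : ℕ) (c : ℕ → ℝ),
    ((fun x : ℝ => ∑ k ∈ Finset.range N, c k * x ^ k) =O[𝓝[≠] (0:ℝ)] fun x => x ^ m) →
    ∀ k, k < m → k < N → c k = 0 := by
  intro m
  induction m with
  | zero => intro N c _ k hk; omega
  | succ m ih =>
    intro N c hO k hkm hkN
    match N, hkN with
    | N + 1, _ =>
    have hc0 : c 0 = 0 := by
      have hcont : Continuous (fun x : ℝ => ∑ k ∈ Finset.range (N+1), c k * x ^ k) := by
        fun_prop
      have hval : (∑ k ∈ Finset.range (N+1), c k * (0:ℝ) ^ k) = c 0 := by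
        rw [Finset.sum_range_succ' (fun k => c k * (0:ℝ) ^ k)]
        simp
      have h1 : Tendsto (fun x : ℝ => ∑ k ∈ Finset.range (N+1), c k * x ^ k)
          (𝓝[≠] (0:ℝ)) (𝓝 (c 0)) := by
        have := (hcont.tendsto 0).mono_left (nhdsWithin_le_nhds (s := {(0:ℝ)}ᶜ))
        rwa [hval] at this
      have h2 : Tendsto (fun x : ℝ => ∑ k ∈ Finset.range (N+1), c k * x ^ k)
          (𝓝[≠] (0:ℝ)) (𝓝 0) := by
        refine hO.trans_tendsto ?_
        have : Tendsto (fun x : ℝ => x ^ (m+1)) (𝓝 (0:ℝ)) (𝓝 ((0:ℝ) ^ (m+1))) :=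
          (continuous_pow (m+1)).tendsto 0
        rw [zero_pow (by omega)] at this
        exact this.mono_left nhdsWithin_le_nhds
      exact tendsto_nhds_unique h1 h2
    have hO' : (fun x : ℝ => ∑ k ∈ Finset.range N, c (k+1) * x ^ k)
        =O[𝓝[≠] (0:ℝ)] fun x => x ^ m := by
      have hmul := hO.mul (isBigO_refl (fun x : ℝ => x⁻¹) (𝓝[≠] (0:ℝ)))
      refine hmul.congr' ?_ ?_
      · filter_upwards [self_mem_nhdsWithin] with x hx
        have hx0 : x ≠ 0 := hx
        rw [Finset.sum_range_succ' (fun k => c k * x ^ k), hc0]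
        rw [zero_mul, add_zero, Finset.sum_mul]
        refine Finset.sum_congr rfl fun k _ => ?_
        field_simp
        ring
      · filter_upwards [self_mem_nhdsWithin] with x hx
        have hx0 : (x:ℝ) ≠ 0 := hx
        field_simp
        ring
    rcases k with _ | k
    · exact hc0
    · exact ih N (fun k => c (k+1)) hO' k (by omega) (by omega)

lemma Pp_eq_sum (x : ℝ) : Pp x = ∑ k ∈ Finset.range 7, tval k * x ^ k := by
  simp only [Finset.sum_range_succ, Finset.sum_range_zero, tval, Pp]
  ring

/-- The main analytic estimate: `(1+x)^{1/x}/e - Pp x = O(x^7)` near `0`. -/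
lemma eFun_isBigO :
    (fun x : ℝ => eFun x / Real.exp 1 - Pp x) =O[𝓝[≠] (0:ℝ)] fun x => x ^ 7 := by
  have hRcont : Continuous Rp := by unfold Rp; fun_prop
  have hScont : Continuous Sp := by unfold Sp; fun_prop
  have hR : ∀ᶠ x : ℝ in 𝓝 0, |Rp x| < 2 := by
    have h := (hRcont.tendsto 0).abs
    refine h.eventually_lt_const ?_
    rw [show Rp 0 = -(1/2) from by norm_num [Rp], abs_neg, abs_of_nonneg (by norm_num)]
    norm_num
  have hhalf : ∀ᶠ x : ℝ in 𝓝 0, |x| < 1/2 := by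
    have h := (continuous_abs.tendsto (0:ℝ))
    rw [abs_zero] at h
    exact h.eventually_lt_const (by norm_num)
  -- the `T - P` piece
  have hTP : (fun x : ℝ => (∑ i ∈ Finset.range 7, Qp x ^ i / (i.factorial : ℝ)) - Pp x)
      =O[𝓝[≠] (0:ℝ)] fun x => x ^ 7 := by
    rw [isBigO_iff]
    refine ⟨|Sp 0| + 1, ?_⟩
    have hS : ∀ᶠ x : ℝ in 𝓝 0, |Sp x| < |Sp 0| + 1 :=
      ((hScont.tendsto 0).abs).eventually_lt_const (by linarith)
    filter_upwards [eventually_nhdsWithin_of_eventually_nhds hS] with x hx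
    rw [key_ring_identity, norm_mul, mul_comm (|Sp 0| + 1)]
    have h7 : (0:ℝ) ≤ ‖x ^ 7‖ := norm_nonneg _
    calc ‖x ^ 7‖ * ‖Sp x‖ ≤ ‖x ^ 7‖ * (|Sp 0| + 1) := by
          exact mul_le_mul_of_nonneg_left hx.le h7
      _ = ‖x ^ 7‖ * (|Sp 0| + 1) := rfl
  -- the `f - T` piece
  have hfT : (fun x : ℝ => eFun x / Real.exp 1
        - (∑ i ∈ Finset.range 7, Qp x ^ i / (i.factorial : ℝ)))
      =O[𝓝[≠] (0:ℝ)] fun x => x ^ 7 := by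
    rw [isBigO_iff]
    refine ⟨140, ?_⟩
    filter_upwards [eventually_nhdsWithin_of_eventually_nhds hhalf,
      eventually_nhdsWithin_of_eventually_nhds hR, self_mem_nhdsWithin] with x hx hRx hx0
    have hx0 : x ≠ 0 := hx0
    have hx' : |x| ≤ 1/2 := hx.le
    have habs : (0:ℝ) ≤ |x| := abs_nonneg x
    set L := Real.log (1 + x) with hL
    set g := L / x - 1 with hg
    -- step 0 : rewrite eFun
    have hf : eFun x / Real.exp 1 = Real.exp g := by
      rw [eFun, if_neg hx0, ← Real.exp_sub]
    -- step 1 : log bound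
    have hlog : |L - Mp x| ≤ 2 * |x| ^ 8 := by
      have h := Real.abs_log_sub_add_sum_range_le (x := -x) (by rw [abs_neg]; linarith) 7
      have hsum : (∑ i ∈ Finset.range 7, (-x) ^ (i + 1) / (i + 1)) = -Mp x := by
        simp only [Finset.sum_range_succ, Finset.sum_range_zero, Mp]
        push_cast
        ring
      rw [hsum, sub_neg_eq_add, abs_neg] at h
      have h' : |L - Mp x| ≤ |x| ^ 8 / (1 - |x|) := by
        rwa [show -Mp x + Real.log (1 + x) = L - Mp x by rw [hL]; ring] at h
      have hden : (1:ℝ)/2 ≤ 1 - |x| := by linarith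
      have hpow : (0:ℝ) ≤ |x| ^ 8 := by positivity
      have : |x| ^ 8 / (1 - |x|) ≤ 2 * |x| ^ 8 := by
        rw [div_le_iff₀ (by linarith)]
        nlinarith
      linarith
    -- step 2 : g - Q bound
    have hgQd : g - Qp x = (L - Mp x) / x := by
      rw [hg]
      field_simp [Qp, Mp]
      rw [Qp, Mp]; ring
    have hgQ : |g - Qp x| ≤ 2 * |x| ^ 7 := by
      rw [hgQd, abs_div, div_le_iff₀ (abs_pos.2 hx0)]
      calc |L - Mp x| ≤ 2 * |x| ^ 8 := hlog
        _ = 2 * |x| ^ 7 * |x| := by ring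
    -- step 3 : g - Q small
    have hx7 : |x| ^ 7 ≤ (1/2) ^ 7 := pow_le_pow_left₀ habs hx' 7
    have hgQ1 : |g - Qp x| ≤ 1 := by
      calc |g - Qp x| ≤ 2 * |x| ^ 7 := hgQ
        _ ≤ 2 * (1/2) ^ 7 := by linarith
        _ ≤ 1 := by norm_num
    -- step 4 : Q bounds
    have hQR : Qp x = x * Rp x := by rw [Qp, Rp]; ring
    have hQ2 : |Qp x| ≤ 2 * |x| := by
      rw [hQR, abs_mul]
      calc |x| * |Rp x| ≤ |x| * 2 := mul_le_mul_of_nonneg_left hRx.le habs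
        _ = 2 * |x| := by ring
    have hQ1 : |Qp x| ≤ 1 := by
      calc |Qp x| ≤ 2 * |x| := hQ2
        _ ≤ 1 := by linarith
    -- step 5 : exp(Q) vs its Taylor sum
    have hexpQ : |Real.exp (Qp x) - ∑ i ∈ Finset.range 7, Qp x ^ i / (i.factorial : ℝ)|
        ≤ 128 * |x| ^ 7 := by
      have h := Real.exp_bound hQ1 (by norm_num : 0 < 7)
      have hc : |Qp x| ^ 7 * ((7:ℕ).succ / ((7:ℕ).factorial * 7) : ℝ) ≤ |Qp x| ^ 7 := by
        have : (((7:ℕ).succ : ℝ) / ((7:ℕ).factorial * 7)) ≤ 1 := by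
          norm_num [Nat.factorial]
        nlinarith [pow_nonneg (abs_nonneg (Qp x)) 7]
      have hQ7 : |Qp x| ^ 7 ≤ 128 * |x| ^ 7 := by
        calc |Qp x| ^ 7 ≤ (2 * |x|) ^ 7 := pow_le_pow_left₀ (abs_nonneg _) hQ2 7
          _ = 128 * |x| ^ 7 := by ring
      calc |Real.exp (Qp x) - ∑ i ∈ Finset.range 7, Qp x ^ i / (i.factorial : ℝ)|
          ≤ |Qp x| ^ 7 * ((7:ℕ).succ / ((7:ℕ).factorial * 7) : ℝ) := h
        _ ≤ |Qp x| ^ 7 := hc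
        _ ≤ 128 * |x| ^ 7 := hQ7
    -- step 6 : exp(g) vs exp(Q)
    have hexpg : |Real.exp g - Real.exp (Qp x)| ≤ 12 * |x| ^ 7 := by
      have hsplit : Real.exp g - Real.exp (Qp x)
          = Real.exp (Qp x) * (Real.exp (g - Qp x) - 1) := by
        rw [mul_sub, mul_one, ← Real.exp_add]
        ring_nf
      have hEQ3 : Real.exp (Qp x) ≤ 3 := by
        calc Real.exp (Qp x) ≤ Real.exp 1 :=
              Real.exp_le_exp.2 (le_trans (le_abs_self _) hQ1)
          _ ≤ 3 := by linarith [Real.exp_one_lt_d9]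
      have hE1 : |Real.exp (g - Qp x) - 1| ≤ 2 * |g - Qp x| :=
        Real.abs_exp_sub_one_le hgQ1
      calc |Real.exp g - Real.exp (Qp x)|
          = Real.exp (Qp x) * |Real.exp (g - Qp x) - 1| := by
            rw [hsplit, abs_mul, abs_of_pos (Real.exp_pos _)]
        _ ≤ 3 * (2 * |g - Qp x|) := by
            have h0 : (0:ℝ) ≤ |Real.exp (g - Qp x) - 1| := abs_nonneg _
            nlinarith [Real.exp_pos (Qp x), abs_nonneg (g - Qp x)]
        _ ≤ 3 * (2 * (2 * |x| ^ 7)) := by nlinarith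
        _ = 12 * |x| ^ 7 := by ring
    -- assemble
    rw [hf]
    have hnx : ‖x ^ 7‖ = |x| ^ 7 := by rw [Real.norm_eq_abs, abs_pow]
    rw [Real.norm_eq_abs, hnx]
    calc |Real.exp g - ∑ i ∈ Finset.range 7, Qp x ^ i / (i.factorial : ℝ)|
        ≤ |Real.exp g - Real.exp (Qp x)|
          + |Real.exp (Qp x) - ∑ i ∈ Finset.range 7, Qp x ^ i / (i.factorial : ℝ)| := by
          exact abs_sub_le _ _ _
      _ ≤ 12 * |x| ^ 7 + 128 * |x| ^ 7 := add_le_add hexpg hexpQ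
      _ = 140 * |x| ^ 7 := by ring
  have := hfT.add hTP
  refine this.congr_left fun x => by ring

theorem eCoef_initial_values (e : ℕ → ℝ)
    (he : ∀ x ∈ Set.Ioo (-1 : ℝ) 1, HasSum (fun k : ℕ => e k * x ^ k) (eFun x / Real.exp 1)) :
    e 0 = 1 ∧ e 1 = -(1 / 2) ∧ e 2 = 11 / 24 ∧ e 3 = -(7 / 16) ∧
    e 4 = 2447 / 5760 ∧ e 5 = -(959 / 2304) ∧ e 6 = 238043 / 580608 := by
  have hsum12 : Summable (fun k : ℕ => e k * (1/2 : ℝ) ^ k) :=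
    (he (1/2) (by norm_num)).summable
  set p : FormalMultilinearSeries ℝ ℝ ℝ := FormalMultilinearSeries.ofScalars ℝ e with hp
  have hball : HasFPowerSeriesOnBall (fun x => eFun x / Real.exp 1) p 0 ((1/2 : ℝ≥0) : ℝ≥0∞) := by
    constructor
    · refine p.le_radius_of_tendsto (l := 0) ?_
      have habs : Tendsto (fun k : ℕ => |e k * (1/2 : ℝ) ^ k|) atTop (𝓝 0) := by
        simpa using hsum12.tendsto_atTop_zero.abs
      refine habs.congr fun n => ?_
      rw [abs_mul, abs_pow, abs_of_nonneg (show (0:ℝ) ≤ 1/2 by norm_num), hp,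
        FormalMultilinearSeries.ofScalars_norm]
      norm_num
    · exact_mod_cast ENNReal.coe_pos.2 (by norm_num)
    · intro y hy
      rw [mem_emetric_ball_zero_iff] at hy
      have hy' : |y| < 1/2 := by
        have h1 : ‖y‖ < ((1/2 : ℝ≥0) : ℝ) := by exact_mod_cast hy
        rw [Real.norm_eq_abs] at h1
        simpa using h1
      obtain ⟨hy1, hy2⟩ := abs_lt.1 hy'
      have h := he y ⟨by linarith, by linarith⟩
      have heq : (fun n => p n fun _ => y) = fun n => e n * y ^ n := by
        funext n
        rw [hp, FormalMultilinearSeries.ofScalars_apply_eq, smul_eq_mul]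
      rw [heq, zero_add]
      exact h
  have hO1 := hball.hasFPowerSeriesAt.isBigO_sub_partialSum_pow 7
  have hA : (fun x : ℝ => eFun x / Real.exp 1 - ∑ k ∈ Finset.range 7, e k * x ^ k)
      =O[𝓝[≠] (0:ℝ)] fun x => x ^ 7 := by
    have h2 : (fun y : ℝ => ‖y‖ ^ 7) =O[𝓝 (0:ℝ)] fun y => y ^ 7 := by
      rw [isBigO_iff]
      refine ⟨1, ?_⟩
      filter_upwards with y
      simp [Real.norm_eq_abs, abs_pow, abs_abs]
    have h3 := (hO1.trans h2).mono (nhdsWithin_le_nhds (s := {(0:ℝ)}ᶜ))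
    refine h3.congr_left fun y => ?_
    rw [zero_add, FormalMultilinearSeries.partialSum]
    congr 1
    exact Finset.sum_congr rfl fun k _ => by
      rw [hp, FormalMultilinearSeries.ofScalars_apply_eq, smul_eq_mul]
  have hD : (fun x : ℝ => ∑ k ∈ Finset.range 7, (tval k - e k) * x ^ k)
      =O[𝓝[≠] (0:ℝ)] fun x => x ^ 7 := by
    have h := hA.sub eFun_isBigO
    refine h.congr_left fun x => ?_
    have hsub : (∑ k ∈ Finset.range 7, (tval k - e k) * x ^ k)
        = (∑ k ∈ Finset.range 7, tval k * x ^ k) - ∑ k ∈ Finset.range 7, e k * x ^ k := by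
      rw [← Finset.sum_sub_distrib]
      exact Finset.sum_congr rfl fun k _ => by ring
    rw [hsub, Pp_eq_sum]
    ring
  have hz := poly_coeff_eq_zero 7 7 (fun k => tval k - e k) hD
  have h0 := hz 0 (by norm_num) (by norm_num)
  have h1 := hz 1 (by norm_num) (by norm_num)
  have h2 := hz 2 (by norm_num) (by norm_num)
  have h3 := hz 3 (by norm_num) (by norm_num)
  have h4 := hz 4 (by norm_num) (by norm_num)
  have h5 := hz 5 (by norm_num) (by norm_num)
  have h6 := hz 6 (by norm_num) (by norm_num)
  simp only [tval, sub_eq_zero] at h0 h1 h2 h3 h4 h5 h6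
  exact ⟨h0.symm, h1.symm, h2.symm, h3.symm, h4.symm, h5.symm, h6.symm⟩
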